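/- arXiv:2303.15203 — 2 statements merged into one kernel-verified Lean document; each statement's English description precedes it below -/
import Mathlib

section
/- Let t be the Thue-Morse sequence, t[k] = parity of the number of 1s in the binary representation of k, and let t_1 be its running sum mod 2. If for nonnegative integers k, k' we write q = ⌊k/2^{n+2}⌋, r = k mod 2^{n+2}, q' = ⌊k'/2^{n+2}⌋, r' = k' mod 2^{n+2}, then t[q] = t[q'] and r = r' imply that for every binary string z, appending z to the binary representations of k and k' yields numbers K, K' with t_{2^n}[K] = t_{2^n}[K']. -/
/-- The Thue–Morse sequence: parity of the number of 1s in the binary representation. -/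
def t (k : ℕ) : ℕ := (Nat.digits 2 k).sum % 2

/-- `ts m` is the m-fold iterated running sum (mod 2) of the Thue–Morse sequence. -/
def ts : ℕ → ℕ → ℕ
  | 0, k => t k
  | m + 1, k => (∑ j ∈ Finset.range (k + 1), ts m j) % 2

/-- The value of a binary string (msd-first). -/
def val (z : List Bool) : ℕ := z.foldl (fun a b => 2 * a + (if b then 1 else 0)) 0

lemma t_lt_two (k : ℕ) : t k < 2 := Nat.mod_lt _ (by norm_num)
lemma t_zero : t 0 = 0 := by simp [t]
lemma t_two_mul (j : ℕ) : t (2 * j) = t j := by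
  rcases Nat.eq_zero_or_pos j with h | h
  · simp [h]
  · unfold t
    rw [Nat.digits_def' (by norm_num : 1 < 2) (by positivity)]
    simp [Nat.mul_div_cancel_left, Nat.mul_mod_right]
lemma t_two_mul_add_one (j : ℕ) : t (2 * j + 1) = (t j + 1) % 2 := by
  unfold t
  rw [Nat.digits_def' (by norm_num : 1 < 2) (by omega)]
  have : (2 * j + 1) % 2 = 1 := by omega
  have h2 : (2 * j + 1) / 2 = j := by omega
  rw [this, h2]
  simp; omega

open Finset in
lemma t_add (n : ℕ) : ∀ i ρ, ρ < 2 ^ n → t (i * 2 ^ n + ρ) = (t i + t ρ) % 2 := by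
  induction n with
  | zero =>
    intro i ρ h
    have : ρ = 0 := by omega
    subst this
    simp [t_zero]
    exact (Nat.mod_eq_of_lt (t_lt_two i)).symm
  | succ n ih =>
    intro i ρ h
    have hd : ρ / 2 < 2 ^ n := by
      have : (2:ℕ) ^ (n+1) = 2 * 2 ^ n := by ring
      omega
    rcases Nat.even_or_odd ρ with he | ho
    · obtain ⟨c, hc⟩ := he
      have hρ : ρ = 2 * c := by omega
      subst hρ
      have h1 : i * 2 ^ (n+1) + 2 * c = 2 * (i * 2 ^ n + c) := by ring
      rw [h1, t_two_mul, t_two_mul, ih i c (by omega)]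
    · obtain ⟨c, hc⟩ := ho
      subst hc
      have h1 : i * 2 ^ (n+1) + (2 * c + 1) = 2 * (i * 2 ^ n + c) + 1 := by ring
      rw [h1, t_two_mul_add_one, t_two_mul_add_one, ih i c (by omega)]
      have := t_lt_two i; have := t_lt_two c
      omega

open Finset in
lemma sum_t_two_mul (M : ℕ) : ∑ i ∈ range (2 * M), t i = M := by
  induction M with
  | zero => simp
  | succ M ih =>
    have : 2 * (M + 1) = (2 * M + 1) + 1 := by ring
    rw [this, Finset.sum_range_succ, Finset.sum_range_succ, ih, t_two_mul_add_one, t_two_mul]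
    have := t_lt_two M
    omega

open Finset in
def P (f : ℕ → ℕ) (k : ℕ) : ℕ := (∑ j ∈ Finset.range (k + 1), f j) % 2

open Finset in
lemma ts_eq (m : ℕ) : ∀ k, ts m k = P^[m] t k := by
  induction m with
  | zero => intro k; simp [ts]
  | succ m ih =>
    intro k
    rw [Function.iterate_succ_apply']
    show (∑ j ∈ Finset.range (k + 1), ts m j) % 2 = P (P^[m] t) k
    unfold P
    congr 1
    exact Finset.sum_congr rfl fun j _ => ih j

open Finset in
lemma dsum (a : ℕ → ℕ) (N : ℕ) :
    ∑ i ∈ range N, ∑ j ∈ range (i + 1), a j = ∑ j ∈ range N, (N - j) * a j := by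
  induction N with
  | zero => simp
  | succ N ih =>
    have hR : ∑ j ∈ range (N + 1), (N + 1 - j) * a j
        = ∑ j ∈ range N, ((N - j) * a j + a j) + a N := by
      rw [Finset.sum_range_succ]
      congr 1
      · apply Finset.sum_congr rfl
        intro j hj
        rw [Finset.mem_range] at hj
        have : N + 1 - j = (N - j) + 1 := by omega
        rw [this]; ring
      · simp
    rw [Finset.sum_range_succ, ih, hR, Finset.sum_add_distrib, Finset.sum_range_succ a N]
    ring

open Finset in
lemma coef (a x : ℕ) : (a * x) % 2 = (a % 2 * x) % 2 := by
  rw [Nat.mul_mod a x 2, Nat.mul_mod (a % 2) x 2]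
  have h1 : a % 2 % 2 = a % 2 := by omega
  rw [h1]

open Finset in
lemma alt (g : ℕ → ℕ) : ∀ K, ∑ j ∈ range (K + 1), ((K + 1 - j) % 2) * g j
    = ∑ a ∈ range (K / 2 + 1), g (2 * a + K % 2) := by
  intro K
  induction K using Nat.strong_induction_on with
  | _ K ih =>
    match K with
    | 0 => simp
    | 1 => simp [Finset.sum_range_succ]
    | (K + 2) =>
      have hL : ∑ j ∈ range (K + 2 + 1), ((K + 2 + 1 - j) % 2) * g j
          = (∑ a ∈ range (K / 2 + 1), g (2 * a + K % 2)) + g (K + 2) := by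
        rw [Finset.sum_range_succ, Finset.sum_range_succ]
        have e1 : (K + 2 + 1 - (K + 1)) % 2 = 0 := by omega
        have e2 : (K + 2 + 1 - (K + 2)) % 2 = 1 := by omega
        rw [e1, e2]
        have e3 : ∑ j ∈ range (K + 1), (K + 2 + 1 - j) % 2 * g j
            = ∑ j ∈ range (K + 1), (K + 1 - j) % 2 * g j := by
          apply Finset.sum_congr rfl
          intro j hj
          rw [Finset.mem_range] at hj
          congr 1
          omega
        rw [e3, ih K (by omega)]
        ring
      have hR : ∑ a ∈ range ((K + 2) / 2 + 1), g (2 * a + (K + 2) % 2)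
          = (∑ a ∈ range (K / 2 + 1), g (2 * a + K % 2)) + g (K + 2) := by
        have e4 : (K + 2) / 2 + 1 = (K / 2 + 1) + 1 := by omega
        rw [e4, Finset.sum_range_succ]
        congr 1
        · apply Finset.sum_congr rfl
          intro a _
          congr 2
          omega
        · congr 1
          omega
      rw [hL, hR]

open Finset in
lemma key (n : ℕ) : ∀ (f : ℕ → ℕ) (k : ℕ),
    P^[2 ^ n] f k = (∑ i ∈ range (k / 2 ^ n + 1), f (i * 2 ^ n + k % 2 ^ n)) % 2 := by
  induction n with
  | zero =>
    intro f k
    simp [P, Nat.div_one, Nat.mod_one]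
  | succ n ih =>
    intro f k
    have hstep : P^[2 ^ (n + 1)] f k = P^[2 ^ n] (P^[2 ^ n] f) k := by
      rw [show (2:ℕ) ^ (n + 1) = 2 ^ n + 2 ^ n from by ring, Function.iterate_add_apply]
    rw [hstep, ih]
    set ρ := k % 2 ^ n with hρ
    set K := k / 2 ^ n with hK
    have hpos : 0 < (2:ℕ) ^ n := by positivity
    have hρlt : ρ < 2 ^ n := Nat.mod_lt _ hpos
    have hterm : ∀ i, P^[2 ^ n] f (i * 2 ^ n + ρ) =
        (∑ i' ∈ range (i + 1), f (i' * 2 ^ n + ρ)) % 2 := by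
      intro i
      rw [ih]
      have hd : (i * 2 ^ n + ρ) / 2 ^ n = i := by
        rw [mul_comm, Nat.mul_add_div hpos, Nat.div_eq_of_lt hρlt]
        omega
      have hm : (i * 2 ^ n + ρ) % 2 ^ n = ρ := by
        rw [mul_comm, Nat.mul_add_mod, Nat.mod_eq_of_lt hρlt]
      rw [hd, hm]
    have h1 : ∑ i ∈ range (K + 1), P^[2 ^ n] f (i * 2 ^ n + ρ)
        = ∑ i ∈ range (K + 1), (∑ i' ∈ range (i + 1), f (i' * 2 ^ n + ρ)) % 2 :=
      Finset.sum_congr rfl fun i _ => hterm i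
    rw [h1, ← Finset.sum_nat_mod, dsum (fun j => f (j * 2 ^ n + ρ)) (K + 1)]
    have h2 : (∑ j ∈ range (K + 1), (K + 1 - j) * f (j * 2 ^ n + ρ)) % 2
        = (∑ j ∈ range (K + 1), ((K + 1 - j) % 2) * f (j * 2 ^ n + ρ)) % 2 := by
      rw [Finset.sum_nat_mod]
      conv_rhs => rw [Finset.sum_nat_mod]
      congr 1
      exact Finset.sum_congr rfl fun j _ => coef _ _
    rw [h2, alt (fun j => f (j * 2 ^ n + ρ)) K]
    have hdiv : K / 2 = k / 2 ^ (n + 1) := by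
      rw [hK, Nat.div_div_eq_div_mul, ← pow_succ]
    have hmod : k % 2 ^ (n + 1) = ρ + 2 ^ n * (K % 2) := by
      rw [pow_succ, Nat.mod_mul]
    rw [hdiv]
    congr 1
    apply Finset.sum_congr rfl
    intro a _
    congr 1
    rw [hmod, pow_succ]
    ring

open Finset in
lemma ts_formula (n k : ℕ) : ts (2 ^ n) k
    = ((∑ i ∈ range (k / 2 ^ n + 1), t i) + (k / 2 ^ n + 1) * t (k % 2 ^ n)) % 2 := by
  rw [ts_eq, key]
  have hρ : k % 2 ^ n < 2 ^ n := Nat.mod_lt _ (by positivity)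
  have h1 : ∑ i ∈ range (k / 2 ^ n + 1), t (i * 2 ^ n + k % 2 ^ n)
      = ∑ i ∈ range (k / 2 ^ n + 1), (t i + t (k % 2 ^ n)) % 2 :=
    Finset.sum_congr rfl fun i _ => t_add n i _ hρ
  rw [h1, ← Finset.sum_nat_mod, Finset.sum_add_distrib, Finset.sum_const, Finset.card_range,
    smul_eq_mul]

open Finset in
lemma t_split (m k : ℕ) : t k = (t (k / 2 ^ m) + t (k % 2 ^ m)) % 2 := by
  conv_lhs => rw [← Nat.div_add_mod k (2 ^ m), mul_comm]
  exact t_add m _ _ (Nat.mod_lt _ (by positivity))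

open Finset in
lemma prefix4 (q q' s : ℕ) (hs : s < 4) (h : t q = t q') :
    (∑ i ∈ range (4 * q + s + 1), t i) % 2 = (∑ i ∈ range (4 * q' + s + 1), t i) % 2 := by
  have e0 : ∀ a : ℕ, ∑ i ∈ range (4 * a + 1), t i = 2 * a + t a := by
    intro a
    rw [show 4 * a + 1 = 2 * (2 * a) + 1 from by ring, Finset.sum_range_succ, sum_t_two_mul,
      t_two_mul, t_two_mul]
  have e1 : ∀ a : ℕ, ∑ i ∈ range (4 * a + 2), t i = 2 * a + 1 := by
    intro a
    rw [show 4 * a + 2 = 2 * (2 * a + 1) from by ring, sum_t_two_mul]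
  have e2 : ∀ a : ℕ, ∑ i ∈ range (4 * a + 3), t i = 2 * a + 1 + (t a + 1) % 2 := by
    intro a
    rw [show 4 * a + 3 = (4 * a + 2) + 1 from by ring, Finset.sum_range_succ, e1,
      show 4 * a + 2 = 2 * (2 * a + 1) from by ring, t_two_mul, t_two_mul_add_one]
  have e3 : ∀ a : ℕ, ∑ i ∈ range (4 * a + 4), t i = 2 * a + 2 := by
    intro a
    rw [show 4 * a + 4 = 2 * (2 * a + 2) from by ring, sum_t_two_mul]
  have hq := t_lt_two q
  have hq' := t_lt_two q'
  interval_cases s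
  · rw [e0, e0]; omega
  · rw [show 4*q+1+1 = 4*q+2 from rfl, show 4*q'+1+1 = 4*q'+2 from rfl, e1, e1]; omega
  · rw [show 4*q+2+1 = 4*q+3 from rfl, show 4*q'+2+1 = 4*q'+3 from rfl, e2, e2]; omega
  · rw [show 4*q+3+1 = 4*q+4 from rfl, show 4*q'+3+1 = 4*q'+4 from rfl, e3, e3]; omega

open Finset in
lemma core (n a b : ℕ) (hq : t (a / 2 ^ (n + 2)) = t (b / 2 ^ (n + 2)))
    (hr : a % 2 ^ (n + 2) = b % 2 ^ (n + 2)) : ts (2 ^ n) a = ts (2 ^ n) b := by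
  rw [ts_formula, ts_formula]
  have hpos : 0 < (2:ℕ) ^ n := by positivity
  have hpow : (2:ℕ) ^ (n + 2) = 2 ^ n * 4 := by ring
  have hdvd : (2:ℕ) ^ n ∣ 2 ^ (n + 2) := pow_dvd_pow 2 (by omega)
  have hρ : a % 2 ^ n = b % 2 ^ n := by
    rw [← Nat.mod_mod_of_dvd a hdvd, ← Nat.mod_mod_of_dvd b hdvd, hr]
  have ha : a % 2 ^ (n + 2) = a % 2 ^ n + 2 ^ n * (a / 2 ^ n % 4) := by
    rw [hpow, Nat.mod_mul]
  have hb : b % 2 ^ (n + 2) = b % 2 ^ n + 2 ^ n * (b / 2 ^ n % 4) := by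
    rw [hpow, Nat.mod_mul]
  have hs : a / 2 ^ n % 4 = b / 2 ^ n % 4 := by
    apply Nat.eq_of_mul_eq_mul_left hpos
    omega
  have hKa : a / 2 ^ n = 4 * (a / 2 ^ (n + 2)) + a / 2 ^ n % 4 := by
    conv_lhs => rw [← Nat.div_add_mod (a / 2 ^ n) 4]
    rw [Nat.div_div_eq_div_mul, ← hpow]
  have hKb : b / 2 ^ n = 4 * (b / 2 ^ (n + 2)) + b / 2 ^ n % 4 := by
    conv_lhs => rw [← Nat.div_add_mod (b / 2 ^ n) 4]
    rw [Nat.div_div_eq_div_mul, ← hpow]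
  have hpre : (∑ i ∈ range (a / 2 ^ n + 1), t i) % 2
      = (∑ i ∈ range (b / 2 ^ n + 1), t i) % 2 := by
    rw [show a / 2 ^ n + 1 = 4 * (a / 2 ^ (n + 2)) + a / 2 ^ n % 4 + 1 from by omega,
      show b / 2 ^ n + 1 = 4 * (b / 2 ^ (n + 2)) + a / 2 ^ n % 4 + 1 from by omega]
    exact prefix4 _ _ _ (Nat.mod_lt _ (by norm_num)) hq
  rw [hρ]
  have hc := t_lt_two (b % 2 ^ n)
  set X := ∑ i ∈ range (a / 2 ^ n + 1), t i with hX
  set Y := ∑ i ∈ range (b / 2 ^ n + 1), t i with hY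
  rcases (by omega : t (b % 2 ^ n) = 0 ∨ t (b % 2 ^ n) = 1) with h | h <;> rw [h]
  · simp only [mul_zero]; omega
  · simp only [mul_one]; omega

open Finset in
lemma foldl_shift : ∀ (z : List Bool) (a : ℕ),
    z.foldl (fun a b => 2 * a + (if b then 1 else 0)) a = a * 2 ^ z.length + val z := by
  intro z
  induction z with
  | nil => intro a; simp [_root_.val]
  | cons b z ih =>
    intro a
    show z.foldl _ (2 * a + (if b then 1 else 0)) = _
    rw [ih]
    have hv : val (b :: z) = (if b then 1 else 0) * 2 ^ z.length + val z := by
      show z.foldl _ (2 * 0 + (if b then 1 else 0)) = _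
      rw [ih]
      ring_nf
    rw [hv]
    simp only [List.length_cons]
    ring

open Finset in
lemma val_lt (z : List Bool) : val z < 2 ^ z.length := by
  induction z with
  | nil => simp [_root_.val]
  | cons b z ih =>
    have hv : val (b :: z) = (if b then 1 else 0) * 2 ^ z.length + val z := by
      show z.foldl _ (2 * 0 + (if b then 1 else 0)) = _
      rw [foldl_shift]
      ring_nf
    have hpow : (2:ℕ) ^ (b :: z).length = 2 * 2 ^ z.length := by
      simp [List.length_cons]; ring
    rw [hv, hpow]
    rcases b with _ | _ <;> simp <;> omega

open Finset in
theorem myhill_nerode_only_if (n k k' : ℕ)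
    (hq : t (k / 2 ^ (n + 2)) = t (k' / 2 ^ (n + 2)))
    (hr : k % 2 ^ (n + 2) = k' % 2 ^ (n + 2)) (z : List Bool) :
    ts (2 ^ n) (k * 2 ^ z.length + val z) = ts (2 ^ n) (k' * 2 ^ z.length + val z) := by
  set L := z.length
  set v := val z with hv
  have hvL : v < 2 ^ L := val_lt z
  apply core
  · -- div part
    rcases le_or_gt (n + 2) L with hL | hL
    · -- L ≥ n + 2
      have hsplitL : (2:ℕ) ^ L = 2 ^ (n + 2) * 2 ^ (L - (n + 2)) := by
        rw [← pow_add]; congr 1; omega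
      have hdiv : ∀ c : ℕ, (c * 2 ^ L + v) / 2 ^ (n + 2)
          = c * 2 ^ (L - (n + 2)) + v / 2 ^ (n + 2) := by
        intro c
        rw [hsplitL, show c * (2 ^ (n + 2) * 2 ^ (L - (n + 2))) + v
          = 2 ^ (n + 2) * (c * 2 ^ (L - (n + 2))) + v from by ring,
          Nat.mul_add_div (by positivity)]
      have hv2 : v / 2 ^ (n + 2) < 2 ^ (L - (n + 2)) := by
        rw [Nat.div_lt_iff_lt_mul (by positivity : (0:ℕ) < 2 ^ (n + 2))]
        calc v < 2 ^ L := hvL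
        _ = 2 ^ (L - (n + 2)) * 2 ^ (n + 2) := by rw [← pow_add]; congr 1; omega
      rw [hdiv, hdiv, t_add _ _ _ hv2, t_add _ _ _ hv2]
      have htk : t k = t k' := by
        rw [t_split (n + 2) k, t_split (n + 2) k', hq, hr]
      rw [htk]
    · -- L < n + 2
      have hsplitL : (2:ℕ) ^ (n + 2) = 2 ^ L * 2 ^ (n + 2 - L) := by
        rw [← pow_add]; congr 1; omega
      have hdiv : ∀ c : ℕ, (c * 2 ^ L + v) / 2 ^ (n + 2) = c / 2 ^ (n + 2 - L) := by
        intro c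
        rw [hsplitL, ← Nat.div_div_eq_div_mul,
          show c * 2 ^ L + v = 2 ^ L * c + v from by ring,
          Nat.mul_add_div (by positivity), Nat.div_eq_of_lt hvL, add_zero]
      have hdiv2 : ∀ c : ℕ, c / 2 ^ (n + 2 - L)
          = (c / 2 ^ (n + 2)) * 2 ^ L + (c % 2 ^ (n + 2)) / 2 ^ (n + 2 - L) := by
        intro c
        conv_lhs => rw [← Nat.div_add_mod c (2 ^ (n + 2))]
        rw [show 2 ^ (n + 2) * (c / 2 ^ (n + 2)) + c % 2 ^ (n + 2)
          = 2 ^ (n + 2 - L) * ((c / 2 ^ (n + 2)) * 2 ^ L) + c % 2 ^ (n + 2) from by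
            rw [hsplitL]; ring,
          Nat.mul_add_div (by positivity)]
      have hrd : (k % 2 ^ (n + 2)) / 2 ^ (n + 2 - L) < 2 ^ L := by
        rw [Nat.div_lt_iff_lt_mul (by positivity : (0:ℕ) < 2 ^ (n + 2 - L))]
        calc k % 2 ^ (n + 2) < 2 ^ (n + 2) := Nat.mod_lt _ (by positivity)
        _ = 2 ^ L * 2 ^ (n + 2 - L) := hsplitL
      have hrd' : (k' % 2 ^ (n + 2)) / 2 ^ (n + 2 - L) < 2 ^ L := by
        rw [← hr]; exact hrd
      rw [hdiv, hdiv, hdiv2 k, hdiv2 k', t_add _ _ _ hrd, t_add _ _ _ hrd', hq, hr]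
  · -- mod part
    have hk : Nat.ModEq (2 ^ (n + 2)) k k' := hr
    exact (hk.mul_right (2 ^ L)).add_right v
end

section
/- For every n ≥ 0, the 2^n-fold running sum (mod 2) of the Thue-Morse sequence t equals g_n(h^ω(0)), where h is the Thue-Morse morphism h(0)=01, h(1)=10, and g_n is the 2^{n+2}-uniform morphism defined by g_n(x) = h^n(x) 1^{2^n} h^n(x) 0^{2^n} for x ∈ {0,1}. -/
/-- The Thue–Morse morphism h, with h(0) = 01 and h(1) = 10. -/
def h (a : ℕ) : List ℕ := if a = 0 then [0, 1] else [1, 0]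

/-- `hIter n x` is `h^n(x)` for a letter `x`. -/
def hIter (n : ℕ) (x : ℕ) : List ℕ := (fun w => w.flatMap h)^[n] [x]

/-- The 2^{n+2}-uniform morphism g_n with g_n(x) = h^n(x) 1^{2^n} h^n(x) 0^{2^n}. -/
def gMor (n : ℕ) (x : ℕ) : List ℕ :=
  hIter n x ++ List.replicate (2 ^ n) 1 ++ hIter n x ++ List.replicate (2 ^ n) 0

lemma t_rec (m : ℕ) (hm : 0 < m) : t m = (m % 2 + t (m / 2)) % 2 := by
  obtain ⟨m, rfl⟩ := Nat.exists_eq_succ_of_ne_zero hm.ne'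
  unfold t
  rw [Nat.digits_add_two_add_one]
  simp only [Nat.succ_eq_add_one, List.sum_cons]
  try norm_num
  try omega

lemma t_even (i : ℕ) : t (2 * i) = t i := by
  rcases Nat.eq_zero_or_pos i with rfl | hi
  · simp
  · rw [t_rec (2 * i) (by omega)]
    have h1 : 2 * i % 2 = 0 := by omega
    have h2 : 2 * i / 2 = i := by omega
    rw [h1, h2, Nat.zero_add, Nat.mod_eq_of_lt (t_lt_two i)]

lemma t_odd (i : ℕ) : t (2 * i + 1) = (t i + 1) % 2 := by
  rw [t_rec (2 * i + 1) (by omega)]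
  have h1 : (2 * i + 1) % 2 = 1 := by omega
  have h2 : (2 * i + 1) / 2 = i := by omega
  rw [h1, h2, Nat.add_comm]

/-! ### `t` in `ZMod 2` -/

def tc (k : ℕ) : ZMod 2 := (t k : ZMod 2)

lemma tc_zero : tc 0 = 0 := by simp [tc, t_zero]

lemma tc_one : tc 1 = 1 := by
  have : t 1 = 1 := by rw [t_rec 1 one_pos]; simp [t_zero]
  simp [tc, this]

lemma tc_rec (m : ℕ) : tc m = ((m % 2 : ℕ) : ZMod 2) + tc (m / 2) := by
  rcases Nat.eq_zero_or_pos m with rfl | hm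
  · simp [tc_zero]
  · unfold tc
    rw [t_rec m hm, ZMod.natCast_mod, Nat.cast_add, ZMod.natCast_mod]

lemma tc_pow_add : ∀ (j q r : ℕ), r < 2 ^ j → tc (q * 2 ^ j + r) = tc q + tc r
  | 0, q, r, hr => by
    interval_cases r
    simp [tc_zero]
  | j + 1, q, r, hr => by
    have hP : 2 ^ (j + 1) = 2 * 2 ^ j := by ring
    set m := q * 2 ^ (j + 1) + r with hm
    have h1 : m % 2 = r % 2 := by
      have : m = 2 * (q * 2 ^ j) + r := by rw [hm, hP]; ring
      omega
    have h2 : m / 2 = q * 2 ^ j + r / 2 := by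
      have : m = 2 * (q * 2 ^ j) + r := by rw [hm, hP]; ring
      omega
    have hr2 : r / 2 < 2 ^ j := by omega
    rw [tc_rec m, h1, h2, tc_pow_add j q (r / 2) hr2, tc_rec r]
    ring

lemma tc_block1 (n a : ℕ) (ha : a < 2 ^ n) : tc (2 ^ n + a) = 1 + tc a := by
  have := tc_pow_add n 1 a ha
  rw [one_mul] at this
  rw [this, tc_one]

lemma tc_block2 (n a : ℕ) (ha : a < 2 * 2 ^ n) : tc (2 * 2 ^ n + a) = 1 + tc a := by
  have h2 : 2 * 2 ^ n = 1 * 2 ^ (n + 1) := by ring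
  have := tc_pow_add (n + 1) 1 a (by rw [pow_succ]; omega)
  rw [one_mul, pow_succ] at this
  rw [show 2 * 2 ^ n + a = 2 ^ n * 2 + a by ring] at *
  rw [this, tc_one]

lemma tc_block3 (n a : ℕ) (ha : a < 2 ^ n) : tc (3 * 2 ^ n + a) = tc a := by
  have h3 : tc 3 = 0 := by
    have t3 : t 3 = 0 := by
      rw [t_rec 3 (by norm_num)]
      norm_num
      rw [t_rec 1 one_pos]
      simp [t_zero]
    simp [tc, t3]
  rw [tc_pow_add n 3 a ha, h3, zero_add]

/-! ### The summation operator -/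

def S (u : ℕ → ZMod 2) (k : ℕ) : ZMod 2 := ∑ j ∈ Finset.range (k + 1), u j

lemma S_succ (u : ℕ → ZMod 2) (k : ℕ) : S u (k + 1) = S u k + u (k + 1) :=
  Finset.sum_range_succ u (k + 1)

lemma S_key : ∀ (n : ℕ) (u : ℕ → ZMod 2) (k : ℕ),
    (S^[2 ^ n] u) (k + 2 ^ n) = (S^[2 ^ n] u) k + u (k + 2 ^ n)
  | 0, u, k => by simpa using S_succ u k
  | n + 1, u, k => by
    have hc : (2 : ZMod 2) = 0 := by decide
    have hiter : S^[2 ^ (n + 1)] u = S^[2 ^ n] (S^[2 ^ n] u) := by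
      rw [show (2:ℕ) ^ (n + 1) = 2 ^ n + 2 ^ n by ring, Function.iterate_add_apply]
    have hidx : k + 2 ^ (n + 1) = k + 2 ^ n + 2 ^ n := by
      have : (2:ℕ) ^ (n + 1) = 2 ^ n + 2 ^ n := by ring
      omega
    rw [hidx, hiter]
    have e1 := S_key n (S^[2 ^ n] u) (k + 2 ^ n)
    have e2 := S_key n (S^[2 ^ n] u) k
    have e3 := S_key n u (k + 2 ^ n)
    linear_combination e1 + e2 + e3 + (S^[2 ^ n] u) (k + 2 ^ n) * hc

lemma S_low : ∀ (n : ℕ) (u : ℕ → ZMod 2) (k : ℕ), k < 2 ^ n → (S^[2 ^ n] u) k = u k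
  | 0, u, k, hk => by
    interval_cases k
    simp [S, Finset.sum_range_one]
  | n + 1, u, k, hk => by
    have hc : (2 : ZMod 2) = 0 := by decide
    have hiter : S^[2 ^ (n + 1)] u = S^[2 ^ n] (S^[2 ^ n] u) := by
      rw [show (2:ℕ) ^ (n + 1) = 2 ^ n + 2 ^ n by ring, Function.iterate_add_apply]
    rw [hiter]
    rcases lt_or_ge k (2 ^ n) with hk' | hk'
    · exact (S_low n (S^[2 ^ n] u) k hk').trans (S_low n u k hk')
    · obtain ⟨a, rfl⟩ : ∃ a, k = a + 2 ^ n := ⟨k - 2 ^ n, by omega⟩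
      have ha : a < 2 ^ n := by
        have : (2:ℕ) ^ (n + 1) = 2 ^ n + 2 ^ n := by ring
        omega
      have e1 := S_key n (S^[2 ^ n] u) a
      have e2 := S_low n (S^[2 ^ n] u) a ha
      have e4 := S_key n u a
      linear_combination e1 + e2 + e4 + (S^[2 ^ n] u) a * hc

/-! ### Link between `ts` and the iterated operator -/

lemma ts_lt_two : ∀ (m k : ℕ), ts m k < 2
  | 0, k => t_lt_two k
  | m + 1, k => Nat.mod_lt _ (by norm_num)

lemma ts_cast : ∀ (m k : ℕ), ((ts m k : ℕ) : ZMod 2) = (S^[m] tc) k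
  | 0, k => rfl
  | m + 1, k => by
    show (((∑ j ∈ Finset.range (k + 1), ts m j) % 2 : ℕ) : ZMod 2) = _
    rw [ZMod.natCast_mod, Nat.cast_sum, Function.iterate_succ_apply']
    show _ = S (S^[m] tc) k
    unfold S
    exact Finset.sum_congr rfl fun j _ => ts_cast m j

/-! ### The formula, in `ZMod 2` -/

def Fz (n k : ℕ) : ZMod 2 :=
  if k % 2 ^ (n + 2) < 2 ^ n then tc (k / 2 ^ (n + 2)) + tc (k % 2 ^ (n + 2))
  else if k % 2 ^ (n + 2) < 2 * 2 ^ n then 1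
  else if k % 2 ^ (n + 2) < 3 * 2 ^ n then
    tc (k / 2 ^ (n + 2)) + tc (k % 2 ^ (n + 2) - 2 * 2 ^ n)
  else 0

lemma pow_n2 (n : ℕ) : (2:ℕ) ^ (n + 2) = 4 * 2 ^ n := by ring

lemma Fz_low (n k : ℕ) (hk : k < 2 ^ n) : Fz n k = tc k := by
  have hM : (2:ℕ) ^ (n + 2) = 4 * 2 ^ n := pow_n2 n
  have h1 : k % 2 ^ (n + 2) = k := Nat.mod_eq_of_lt (by omega)
  have h2 : k / 2 ^ (n + 2) = 0 := Nat.div_eq_of_lt (by omega)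
  rw [Fz, h1, h2, if_pos hk, tc_zero, zero_add]

lemma Fz_eval (n q r : ℕ) (hr : r < 2 ^ (n + 2)) :
    Fz n (q * 2 ^ (n + 2) + r) =
      if r < 2 ^ n then tc q + tc r
      else if r < 2 * 2 ^ n then 1
      else if r < 3 * 2 ^ n then tc q + tc (r - 2 * 2 ^ n)
      else 0 := by
  have hpos : 0 < (2:ℕ) ^ (n + 2) := by positivity
  have hdiv : (q * 2 ^ (n + 2) + r) / 2 ^ (n + 2) = q := by
    rw [mul_comm, Nat.mul_add_div hpos, Nat.div_eq_of_lt hr, add_zero]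
  have hmod : (q * 2 ^ (n + 2) + r) % 2 ^ (n + 2) = r := by
    rw [mul_comm, Nat.mul_add_mod, Nat.mod_eq_of_lt hr]
  rw [Fz, hdiv, hmod]

lemma Fz_rec (n k : ℕ) : Fz n (k + 2 ^ n) = tc (k + 2 ^ n) + Fz n k := by
  have hc : (2 : ZMod 2) = 0 := by decide
  have hM : (2:ℕ) ^ (n + 2) = 4 * 2 ^ n := pow_n2 n
  have hN : 0 < (2:ℕ) ^ n := by positivity
  obtain ⟨q, r, hr, hk⟩ : ∃ q r, r < 2 ^ (n + 2) ∧ k = q * 2 ^ (n + 2) + r :=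
    ⟨k / 2 ^ (n + 2), k % 2 ^ (n + 2), Nat.mod_lt _ (by positivity),
      by rw [mul_comm]; exact (Nat.div_add_mod k (2 ^ (n + 2))).symm⟩
  subst hk
  rw [Fz_eval n q r hr]
  rcases lt_or_ge r (2 ^ n) with h1 | h1
  · -- case A : r < N
    have e1 : q * 2 ^ (n + 2) + r + 2 ^ n = q * 2 ^ (n + 2) + (r + 2 ^ n) := by ring
    rw [e1, Fz_eval n q (r + 2 ^ n) (by omega),
      tc_pow_add (n + 2) q (r + 2 ^ n) (by omega),
      if_neg (by omega), if_pos (by omega),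
      show r + 2 ^ n = 2 ^ n + r by ring, tc_block1 n r h1, if_pos h1]
    linear_combination (-(tc q) - tc r) * hc
  rcases lt_or_ge r (2 * 2 ^ n) with h2 | h2
  · -- case B : N ≤ r < 2N
    have e1 : q * 2 ^ (n + 2) + r + 2 ^ n = q * 2 ^ (n + 2) + (r + 2 ^ n) := by ring
    rw [e1, Fz_eval n q (r + 2 ^ n) (by omega),
      tc_pow_add (n + 2) q (r + 2 ^ n) (by omega),
      if_neg (by omega), if_neg (by omega), if_pos (by omega),
      show r + 2 ^ n - 2 * 2 ^ n = r - 2 ^ n by omega,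
      show r + 2 ^ n = 2 * 2 ^ n + (r - 2 ^ n) by omega,
      tc_block2 n (r - 2 ^ n) (by omega),
      if_neg (by omega), if_pos h2]
    linear_combination -hc
  rcases lt_or_ge r (3 * 2 ^ n) with h3 | h3
  · -- case C : 2N ≤ r < 3N
    have e1 : q * 2 ^ (n + 2) + r + 2 ^ n = q * 2 ^ (n + 2) + (r + 2 ^ n) := by ring
    rw [e1, Fz_eval n q (r + 2 ^ n) (by omega),
      tc_pow_add (n + 2) q (r + 2 ^ n) (by omega),
      if_neg (by omega), if_neg (by omega), if_neg (by omega),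
      show r + 2 ^ n = 3 * 2 ^ n + (r - 2 * 2 ^ n) by omega,
      tc_block3 n (r - 2 * 2 ^ n) (by omega),
      if_neg (by omega), if_neg (by omega), if_pos h3]
    linear_combination (-(tc q) - tc (r - 2 * 2 ^ n)) * hc
  · -- case D : 3N ≤ r < 4N
    have e1 : q * 2 ^ (n + 2) + r + 2 ^ n = (q + 1) * 2 ^ (n + 2) + (r - 3 * 2 ^ n) := by
      have : (q + 1) * 2 ^ (n + 2) = q * 2 ^ (n + 2) + 2 ^ (n + 2) := by ring
      omega
    rw [e1, Fz_eval n (q + 1) (r - 3 * 2 ^ n) (by omega),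
      tc_pow_add (n + 2) (q + 1) (r - 3 * 2 ^ n) (by omega),
      if_pos (by omega),
      if_neg (by omega), if_neg (by omega), if_neg (by omega)]
    ring

/-- The main identity in `ZMod 2`. -/
lemma main_z (n : ℕ) : ∀ k, (S^[2 ^ n] tc) k = Fz n k := by
  intro k
  induction k using Nat.strong_induction_on with
  | _ k ih =>
    rcases lt_or_ge k (2 ^ n) with hk | hk
    · rw [S_low n tc k hk, Fz_low n k hk]
    · have hN : 0 < (2:ℕ) ^ n := by positivity
      obtain ⟨a, rfl⟩ : ∃ a, k = a + 2 ^ n := ⟨k - 2 ^ n, by omega⟩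
      rw [S_key n tc a, ih a (by omega), Fz_rec n a]
      ring

/-! ### Explicit form of `hIter` -/

lemma range_map_two (m : ℕ) (f : ℕ → ℕ) :
    (List.range (2 * m)).map f
      = (List.range m).flatMap (fun i => [f (2 * i), f (2 * i + 1)]) := by
  induction m with
  | zero => simp
  | succ m ih =>
    rw [show 2 * (m + 1) = (2 * m + 1) + 1 by ring, List.range_succ, List.range_succ,
      List.range_succ, List.map_append, List.map_append, List.flatMap_append, ← ih]
    simp [show 2 * m + 1 + 0 = 2 * m + 1 by ring]

lemma hIter_eq (n : ℕ) : ∀ x, x < 2 →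
    hIter n x = (List.range (2 ^ n)).map (fun i => (x + t i) % 2) := by
  induction n with
  | zero =>
    intro x hx
    have : List.range 1 = [0] := by decide
    simp [hIter, this, t_zero, Nat.mod_eq_of_lt hx]
  | succ n ih =>
    intro x hx
    have step : hIter (n + 1) x = (hIter n x).flatMap h := by
      unfold hIter
      rw [Function.iterate_succ_apply']
    rw [step, ih x hx, List.flatMap_map, show (2:ℕ) ^ (n + 1) = 2 * 2 ^ n by ring,
      range_map_two]
    apply List.flatMap_congr
    intro i hi
    have hti := t_lt_two i
    rcases (by omega : (x + t i) % 2 = 0 ∨ (x + t i) % 2 = 1) with hf | hf <;>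
      simp [h, hf, t_even, t_odd] <;> omega

/-! ### Evaluating `gMor` -/

lemma gMor_getD (n x r : ℕ) (hx : x < 2) (hr : r < 2 ^ (n + 2)) :
    (gMor n x).getD r 0 =
      if r < 2 ^ n then (x + t r) % 2
      else if r < 2 * 2 ^ n then 1
      else if r < 3 * 2 ^ n then (x + t (r - 2 * 2 ^ n)) % 2
      else 0 := by
  have hM : (2:ℕ) ^ (n + 2) = 4 * 2 ^ n := pow_n2 n
  have hlen : (hIter n x).length = 2 ^ n := by
    rw [hIter_eq n x hx]; simp
  have hA : ∀ i, i < 2 ^ n → (hIter n x).getD i 0 = (x + t i) % 2 := by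
    intro i hi
    rw [hIter_eq n x hx, List.getD_eq_getElem _ _ (by simpa using hi)]
    simp
  rw [gMor, List.append_assoc, List.append_assoc]
  rcases lt_or_ge r (2 ^ n) with h1 | h1
  · rw [List.getD_append _ _ _ _ (by omega), hA r h1, if_pos h1]
  rw [List.getD_append_right _ _ _ _ (by omega), hlen]
  rcases lt_or_ge r (2 * 2 ^ n) with h2 | h2
  · rw [List.getD_append _ _ _ _ (by rw [List.length_replicate]; omega),
      List.getD_eq_getElem _ _ (by rw [List.length_replicate]; omega),
      List.getElem_replicate, if_neg (by omega), if_pos h2]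
  rw [List.getD_append_right _ _ _ _ (by rw [List.length_replicate]; omega),
    List.length_replicate]
  rcases lt_or_ge r (3 * 2 ^ n) with h3 | h3
  · rw [List.getD_append _ _ _ _ (by rw [hlen]; omega), hA _ (by omega),
      if_neg (by omega), if_neg (by omega), if_pos h3,
      show r - 2 ^ n - 2 ^ n = r - 2 * 2 ^ n by omega]
  · rw [List.getD_append_right _ _ _ _ (by rw [hlen]; omega), hlen,
      List.getD_eq_getElem _ _ (by rw [List.length_replicate]; omega),
      List.getElem_replicate, if_neg (by omega), if_neg (by omega), if_neg (by omega)]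

lemma cast_inj_two {a b : ℕ} (ha : a < 2) (hb : b < 2)
    (hab : (a : ZMod 2) = (b : ZMod 2)) : a = b := by
  interval_cases a <;> interval_cases b <;> first | rfl | (exfalso; revert hab; decide)

/-- `ts (2^n)` equals `g_n` applied to the fixed point `h^ω(0)` (which is the
Thue–Morse sequence `t`): the k-th letter of `g_n(h^ω(0))` is the
`k mod 2^{n+2}`-th letter of the image of the `⌊k/2^{n+2}⌋`-th letter. -/
theorem tm_sum_as_morphism (n k : ℕ) :
    ts (2 ^ n) k = (gMor n (t (k / 2 ^ (n + 2)))).getD (k % 2 ^ (n + 2)) 0 := by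
  have hr : k % 2 ^ (n + 2) < 2 ^ (n + 2) := Nat.mod_lt _ (by positivity)
  rw [gMor_getD n (t (k / 2 ^ (n + 2))) (k % 2 ^ (n + 2)) (t_lt_two _) hr]
  refine cast_inj_two (ts_lt_two _ _) ?_ ?_
  · split_ifs <;> first | exact Nat.mod_lt _ (by norm_num) | norm_num
  · rw [show ((ts (2 ^ n) k : ℕ) : ZMod 2) = Fz n k from (ts_cast (2 ^ n) k).trans (main_z n k)]
    unfold Fz
    split_ifs <;> simp [tc, ZMod.natCast_mod, Nat.cast_add]
end
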